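/- Let d ≥ 1 be an integer, let η₁ > −2, ξ > 0, k_c > 0 and ε > 0 be real numbers. For each integer n ≥ 1 set A_n = ∫₀^{k_c} k^{2n+d+1}/(1 + η₁(kξ)² + (kξ)⁴) dk, and for 0 < r < 1 set u_n(r) = (2π)^{−d/2} r^{2n} |log r|^{1+ε} A_n / (Γ(n+1) Γ(n + d/2)). Then there exists a constant c > 0 such that for every r ∈ (0,1) the series Σ_{n≥1} (−1)^{n+1} u_n(r) converges absolutely and |Σ_{n≥1} (−1)^{n+1} u_n(r)| ≤ c. (This is the analytic core of the theorem that band-limited FGC Spartan spatial random fields have almost surely differentiable sample paths: the quantity ζ_x(r) = −[ΔG_x(0) − ΔG_x(r)] equals this alternating series and hence satisfies ζ_x(r) ≤ c/|log r|^{1+ε} for 0 < r < 1.) -/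

import Mathlib

open MeasureTheory Real

-- Uniform lower bound for Gamma on [3/2, ∞).
lemma gamma_lb {x : ℝ} (hx : 3/2 ≤ x) : (1/2 : ℝ) ≤ Real.Gamma x := by
  have hmono := Real.Gamma_strictMonoOn_Ici.monotoneOn
  rcases le_or_gt 2 x with h2 | h2
  · have : Real.Gamma 2 ≤ Real.Gamma x :=
      hmono (by simp [Set.mem_Ici]) (Set.mem_Ici.2 h2) h2
    rw [Real.Gamma_two] at this; linarith
  · have hx0 : x ≠ 0 := by positivity
    have hrec : Real.Gamma (x + 1) = x * Real.Gamma x := Real.Gamma_add_one hx0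
    have h1 : Real.Gamma 2 ≤ Real.Gamma (x + 1) :=
      hmono (by simp [Set.mem_Ici]) (Set.mem_Ici.2 (by linarith)) (by linarith)
    rw [Real.Gamma_two] at h1
    have hxpos : (0:ℝ) < x := by linarith
    have : 1 ≤ x * Real.Gamma x := by linarith
    nlinarith [Real.Gamma_pos_of_pos hxpos]

set_option maxHeartbeats 1600000 in
/-- Analytic core of sample-path differentiability of band-limited FGC Spartan
random fields: with A_n = ∫₀^{k_c} k^{2n+d+1}/(1 + η₁(kξ)² + (kξ)⁴) dk and
u_n(r) = (2π)^{−d/2} r^{2n} |log r|^{1+ε} A_n / (Γ(n+1) Γ(n+d/2)), there is a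
constant c > 0 such that for every 0 < r < 1 the alternating series
Σ_{n≥1} (−1)^{n+1} u_n(r) converges absolutely and its sum is bounded by c in
absolute value.  (Indexing: the series over n ≥ 1 is written as a sum over
m : ℕ of the term (−1)^{(m+1)+1} u_{m+1}(r) = (−1)^m u_{m+1}(r).) -/
theorem fgc_ssrf_sample_path_series_bound
    (d : ℕ) (hd : 1 ≤ d) (η₁ ξ kc ε : ℝ)
    (hη : η₁ > -2) (hξ : 0 < ξ) (hkc : 0 < kc) (hε : 0 < ε)
    (A : ℕ → ℝ)
    (hA : ∀ n : ℕ, A n =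
      ∫ k in (0 : ℝ)..kc,
        k ^ (2 * n + d + 1) / (1 + η₁ * (k * ξ) ^ 2 + (k * ξ) ^ 4))
    (u : ℕ → ℝ → ℝ)
    (hu : ∀ (n : ℕ) (r : ℝ), u n r =
      (2 * π) ^ (-(d : ℝ) / 2) * r ^ (2 * n) * |Real.log r| ^ (1 + ε) * A n /
        (Real.Gamma (n + 1) * Real.Gamma ((n : ℝ) + d / 2))) :
    ∃ c > 0, ∀ r ∈ Set.Ioo (0 : ℝ) 1,
      Summable (fun m : ℕ => |(-1 : ℝ) ^ m * u (m + 1) r|) ∧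
      |∑' m : ℕ, (-1 : ℝ) ^ m * u (m + 1) r| ≤ c := by
  -- positive lower bound for the denominator of the integrand
  obtain ⟨δ, hδ, hden⟩ :
      ∃ δ : ℝ, 0 < δ ∧ ∀ k : ℝ, δ ≤ 1 + η₁ * (k * ξ) ^ 2 + (k * ξ) ^ 4 := by
    refine ⟨1 - (min η₁ 0) ^ 2 / 4, ?_, ?_⟩
    · have h2 : -2 < min η₁ 0 := lt_min hη (by norm_num)
      have h3 : min η₁ 0 ≤ 0 := min_le_right _ _
      nlinarith
    · intro k
      have h4 : (k * ξ) ^ 4 = ((k * ξ) ^ 2) ^ 2 := by ring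
      rw [h4]
      have h1 : min η₁ 0 ≤ η₁ := min_le_left _ _
      have ht : (0:ℝ) ≤ (k * ξ) ^ 2 := sq_nonneg _
      nlinarith [sq_nonneg ((k * ξ) ^ 2 + min η₁ 0 / 2),
        mul_le_mul_of_nonneg_right h1 ht]
  -- bound on A n
  have hAbound : ∀ n : ℕ, |A n| ≤ kc ^ (2 * n + d + 2) / δ := by
    intro n
    rw [hA n]
    have key : |∫ k in (0:ℝ)..kc,
        k ^ (2 * n + d + 1) / (1 + η₁ * (k * ξ) ^ 2 + (k * ξ) ^ 4)|
        ≤ kc ^ (2 * n + d + 1) / δ * |kc - 0| := by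
      rw [← Real.norm_eq_abs]
      apply intervalIntegral.norm_integral_le_of_norm_le_const
      intro x hx
      rw [Set.uIoc_of_le hkc.le] at hx
      have hx0 : 0 < x := hx.1
      have hxkc : x ≤ kc := hx.2
      have hd1 : δ ≤ 1 + η₁ * (x * ξ) ^ 2 + (x * ξ) ^ 4 := hden x
      have hd0 : 0 < 1 + η₁ * (x * ξ) ^ 2 + (x * ξ) ^ 4 := lt_of_lt_of_le hδ hd1
      rw [Real.norm_eq_abs, abs_div, abs_of_pos hd0,
        abs_of_nonneg (by positivity : (0:ℝ) ≤ x ^ (2 * n + d + 1))]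
      exact div_le_div₀ (by positivity) (pow_le_pow_left₀ hx0.le hxkc _) hδ hd1
    rw [sub_zero, abs_of_pos hkc] at key
    calc |∫ k in (0:ℝ)..kc,
        k ^ (2 * n + d + 1) / (1 + η₁ * (k * ξ) ^ 2 + (k * ξ) ^ 4)|
        ≤ kc ^ (2 * n + d + 1) / δ * kc := key
      _ = kc ^ (2 * n + d + 2) / δ := by
          rw [pow_succ]; ring
  -- bound on r ^ 2 * |log r| ^ (1 + ε)
  obtain ⟨M, hMdef⟩ : ∃ M : ℝ, M = ((1 + ε) / 2) ^ (1 + ε) := ⟨_, rfl⟩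
  have hM0 : 0 ≤ M := hMdef ▸ Real.rpow_nonneg (by positivity) _
  have hMbound : ∀ r ∈ Set.Ioo (0:ℝ) 1, r ^ 2 * |Real.log r| ^ (1 + ε) ≤ M := by
    intro r hr
    obtain ⟨hr0, hr1⟩ := hr
    obtain ⟨q, hq⟩ : ∃ q : ℝ, q = 2 / (1 + ε) := ⟨_, rfl⟩
    have hqpos : 0 < q := by rw [hq]; positivity
    have hy0 : 0 < r ^ q := Real.rpow_pos_of_pos hr0 _
    have hy1 : r ^ q ≤ 1 := (Real.rpow_le_one hr0.le hr1.le hqpos.le)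
    have hlog := Real.abs_log_mul_self_lt (r ^ q) hy0 hy1
    rw [Real.log_rpow hr0, abs_mul, abs_mul, abs_of_pos hqpos,
      abs_of_pos hy0] at hlog
    -- hlog : q * |log r| * (r ^ q) < 1
    have hkey : |Real.log r| * r ^ q ≤ 1 / q := by
      rw [le_div_iff₀ hqpos]
      nlinarith
    have h1 : r ^ 2 * |Real.log r| ^ (1 + ε)
        = (|Real.log r| * r ^ q) ^ (1 + ε) := by
      rw [Real.mul_rpow (abs_nonneg _) hy0.le, ← Real.rpow_natCast r 2,
        ← Real.rpow_mul hr0.le]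
      have : q * (1 + ε) = 2 := by
        rw [hq]; field_simp
      rw [this]
      push_cast
      ring
    rw [h1, hMdef]
    have : (1:ℝ) / q = (1 + ε) / 2 := by rw [hq]; field_simp
    rw [← this]
    exact Real.rpow_le_rpow (by positivity) hkey (by positivity)
  -- the dominating summable series
  obtain ⟨P, hPdef⟩ : ∃ P : ℝ, P = (2 * π) ^ (-(d : ℝ) / 2) := ⟨_, rfl⟩
  have hP : 0 < P := hPdef ▸ Real.rpow_pos_of_pos (by positivity) _
  obtain ⟨K, hKdef⟩ : ∃ K : ℝ, K = P * M * kc ^ (d + 4) * 2 / δ := ⟨_, rfl⟩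
  have hK0 : 0 ≤ K := by rw [hKdef]; positivity
  obtain ⟨B, hBdef⟩ : ∃ B : ℕ → ℝ,
      B = fun m => K * (kc ^ 2) ^ m / ((Nat.factorial (m + 1) : ℕ) : ℝ) := ⟨_, rfl⟩
  have hB0 : ∀ m, 0 ≤ B m := by
    intro m
    rw [hBdef]
    have : (0:ℝ) < ((Nat.factorial (m + 1) : ℕ) : ℝ) := by positivity
    positivity
  have hBsum : Summable B := by
    refine Summable.of_nonneg_of_le hB0 ?_
      ((Real.summable_pow_div_factorial (kc ^ 2)).mul_left K)
    intro m
    rw [hBdef]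
    simp only
    rw [div_eq_mul_inv, mul_assoc, ← div_eq_mul_inv]
    apply mul_le_mul_of_nonneg_left _ hK0
    apply div_le_div_of_nonneg_left (by positivity) (by positivity)
    exact_mod_cast Nat.factorial_le (Nat.le_succ m)
  -- key pointwise bound
  have hub : ∀ r ∈ Set.Ioo (0:ℝ) 1, ∀ m : ℕ, |u (m + 1) r| ≤ B m := by
    intro r hr m
    obtain ⟨hr0, hr1⟩ := hr
    rw [hu]
    obtain ⟨L, hLdef⟩ : ∃ L : ℝ, L = |Real.log r| ^ (1 + ε) := ⟨_, rfl⟩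
    rw [← hPdef, ← hLdef]
    have hL0 : 0 ≤ L := hLdef ▸ Real.rpow_nonneg (abs_nonneg _) _
    have hG1 : Real.Gamma ((m + 1 : ℕ) + 1) = ((Nat.factorial (m + 1) : ℕ) : ℝ) := by
      exact_mod_cast Real.Gamma_nat_eq_factorial (m + 1)
    have hG2pos : 0 < Real.Gamma (((m + 1 : ℕ) : ℝ) + d / 2) := by
      apply Real.Gamma_pos_of_pos
      have : (1:ℝ) ≤ (d:ℝ) := by exact_mod_cast hd
      push_cast
      linarith
    have hG2 : (1/2 : ℝ) ≤ Real.Gamma (((m + 1 : ℕ) : ℝ) + d / 2) := by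
      apply gamma_lb
      have : (1:ℝ) ≤ (d:ℝ) := by exact_mod_cast hd
      push_cast
      linarith
    have hGprodpos : 0 < Real.Gamma ((m + 1 : ℕ) + 1) *
        Real.Gamma (((m + 1 : ℕ) : ℝ) + d / 2) := by
      rw [hG1]; positivity
    -- numerator bound
    have hrpow : r ^ (2 * (m + 1)) * L ≤ M * 1 := by
      have hMb : r ^ 2 * L ≤ M := by
        rw [hLdef]; exact hMbound r ⟨hr0, hr1⟩
      have h2 : r ^ (2 * m) ≤ 1 := pow_le_one₀ hr0.le hr1.le
      have hrL : 0 ≤ r ^ 2 * L := mul_nonneg (by positivity) hL0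
      calc r ^ (2 * (m + 1)) * L = (r ^ 2 * L) * r ^ (2 * m) := by ring
        _ ≤ M * 1 := mul_le_mul hMb h2 (by positivity) hM0
    have hAb : |A (m + 1)| ≤ kc ^ (d + 4) * (kc ^ 2) ^ m / δ := by
      have := hAbound (m + 1)
      have heq : kc ^ (2 * (m + 1) + d + 2) = kc ^ (d + 4) * (kc ^ 2) ^ m := by
        rw [← pow_mul, ← pow_add]
        ring_nf
      rw [heq] at this
      exact this
    rw [abs_div, abs_of_pos hGprodpos]
    have hnum : |P * r ^ (2 * (m + 1)) * L * A (m + 1)|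
        ≤ P * M * (kc ^ (d + 4) * (kc ^ 2) ^ m / δ) := by
      rw [abs_mul, abs_mul, abs_mul, abs_of_pos hP,
        abs_of_nonneg (pow_nonneg hr0.le _), abs_of_nonneg hL0]
      calc P * r ^ (2 * (m + 1)) * L * |A (m + 1)|
          = P * ((r ^ (2 * (m + 1)) * L) * |A (m + 1)|) := by ring
        _ ≤ P * ((M * 1) * (kc ^ (d + 4) * (kc ^ 2) ^ m / δ)) := by
            apply mul_le_mul_of_nonneg_left _ hP.le
            exact mul_le_mul hrpow hAb (abs_nonneg _)
              (by positivity)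
        _ = P * M * (kc ^ (d + 4) * (kc ^ 2) ^ m / δ) := by ring
    calc |P * r ^ (2 * (m + 1)) * L * A (m + 1)| /
          (Real.Gamma ((m + 1 : ℕ) + 1) * Real.Gamma (((m + 1 : ℕ) : ℝ) + d / 2))
        ≤ (P * M * (kc ^ (d + 4) * (kc ^ 2) ^ m / δ)) / (((Nat.factorial (m + 1) : ℕ) : ℝ) * (1/2)) := by
          apply div_le_div₀ (mul_nonneg (mul_nonneg hP.le hM0)
            (by positivity)) hnum (by positivity)
          rw [hG1]
          exact mul_le_mul_of_nonneg_left hG2 (by positivity)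
      _ = B m := by
          rw [hBdef, hKdef]
          simp only
          have : (0:ℝ) < ((Nat.factorial (m + 1) : ℕ) : ℝ) := by positivity
          field_simp
  -- assemble
  have htsum0 : 0 ≤ ∑' m, B m := tsum_nonneg hB0
  refine ⟨∑' m, B m + 1, by linarith, ?_⟩
  · intro r hr
    have habs : ∀ m : ℕ, |(-1 : ℝ) ^ m * u (m + 1) r| = |u (m + 1) r| := by
      intro m
      rw [abs_mul, abs_pow, abs_neg, abs_one, one_pow, one_mul]
    have hsum : Summable (fun m : ℕ => |(-1 : ℝ) ^ m * u (m + 1) r|) := by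
      apply Summable.of_nonneg_of_le (fun m => abs_nonneg _) _ hBsum
      intro m
      rw [habs m]
      exact hub r hr m
    refine ⟨hsum, ?_⟩
    calc |∑' m : ℕ, (-1 : ℝ) ^ m * u (m + 1) r|
        ≤ ∑' m : ℕ, |(-1 : ℝ) ^ m * u (m + 1) r| := by
          have hnorm : Summable (fun m : ℕ => ‖(-1 : ℝ) ^ m * u (m + 1) r‖) := by
            simpa only [Real.norm_eq_abs] using hsum
          simpa only [Real.norm_eq_abs] using norm_tsum_le_tsum_norm hnorm
      _ ≤ ∑' m, B m := by
          apply Summable.tsum_le_tsum _ hsum hBsum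
          intro m
          rw [habs m]
          exact hub r hr m
      _ ≤ ∑' m, B m + 1 := by linarith
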